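/- In the Cadzow iteration for rank-1 Hankel approximation, the sequence of largest singular values (σ_j) is monotonically nonincreasing: σ_{j+1} = ‖P(σ_j·u_j·v_j^*)‖₂ ≤ σ_j, where u_j, v_j are unit vectors. Moreover, the inequality is strict unless u_j·v_j^* is a Hankel matrix. -/

import Mathlib

open Matrix Finset

noncomputable def hproj {M N : ℕ} (A : Matrix (Fin M) (Fin N) ℂ) :
    Matrix (Fin M) (Fin N) ℂ :=
  fun k l =>
    (∑ p ∈ Finset.univ.filter
        (fun p : Fin M × Fin N => (p.1 : ℕ) + (p.2 : ℕ) = (k : ℕ) + (l : ℕ)), A p.1 p.2) /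
      ((Finset.univ.filter
        (fun p : Fin M × Fin N => (p.1 : ℕ) + (p.2 : ℕ) = (k : ℕ) + (l : ℕ))).card : ℂ)

noncomputable def cvnorm {ι : Type*} [Fintype ι] (x : ι → ℂ) : ℝ :=
  Real.sqrt (∑ i, ‖x i‖ ^ 2)

/-- Spectral norm (largest singular value) of a complex matrix. -/
noncomputable def cspecNorm {M N : ℕ} (A : Matrix (Fin M) (Fin N) ℂ) : ℝ :=
  sSup {r : ℝ | ∃ x : Fin N → ℂ, cvnorm x = 1 ∧ r = cvnorm (A.mulVec x)}

def IsHankel {M N : ℕ} (A : Matrix (Fin M) (Fin N) ℂ) : Prop :=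
  ∀ (k m : Fin M) (l n : Fin N), (k : ℕ) + (l : ℕ) = (m : ℕ) + (n : ℕ) → A k l = A m n


lemma pythagoras {ι : Type*} (S : Finset ι) (hS : S.Nonempty) (f : ι → ℂ) :
    ∑ i ∈ S, ‖f i‖ ^ 2
      = (∑ i ∈ S, ‖f i - (∑ j ∈ S, f j) / (S.card : ℂ)‖ ^ 2)
        + (S.card : ℝ) * ‖(∑ j ∈ S, f j) / (S.card : ℂ)‖ ^ 2 := by
  set c : ℂ := (∑ j ∈ S, f j) / (S.card : ℂ) with hc
  have hcard : (S.card : ℂ) ≠ 0 := by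
    exact_mod_cast Nat.cast_ne_zero.mpr hS.card_pos.ne'
  have hsum : ∑ i ∈ S, (f i - c) = 0 := by
    rw [Finset.sum_sub_distrib, Finset.sum_const, nsmul_eq_mul, hc,
      mul_div_cancel₀ _ hcard, sub_self]
  have hns : ∀ z : ℂ, ‖z‖ ^ 2 = Complex.normSq z := by
    intro z; rw [Complex.sq_norm]
  have h1 : ∀ i, ‖f i‖ ^ 2
      = ‖f i - c‖ ^ 2 + ‖c‖ ^ 2 + 2 * ((f i - c) * (starRingEnd ℂ) c).re := by
    intro i
    have h := Complex.normSq_add (f i - c) c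
    rw [sub_add_cancel] at h
    simp only [hns]
    linarith [h]
  calc ∑ i ∈ S, ‖f i‖ ^ 2
      = ∑ i ∈ S, (‖f i - c‖ ^ 2 + ‖c‖ ^ 2 + 2 * ((f i - c) * (starRingEnd ℂ) c).re) :=
        Finset.sum_congr rfl fun i _ => h1 i
    _ = (∑ i ∈ S, ‖f i - c‖ ^ 2) + (S.card : ℝ) * ‖c‖ ^ 2
        + 2 * ((∑ i ∈ S, (f i - c)) * (starRingEnd ℂ) c).re := by
        rw [Finset.sum_add_distrib, Finset.sum_add_distrib, Finset.sum_const,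
          nsmul_eq_mul]
        congr 1
        rw [← Finset.mul_sum, Finset.sum_mul]
        rw [Complex.re_sum]
    _ = (∑ i ∈ S, ‖f i - c‖ ^ 2) + (S.card : ℝ) * ‖c‖ ^ 2 := by
        rw [hsum, zero_mul, Complex.zero_re, mul_zero, add_zero]

lemma avg_le {ι : Type*} (S : Finset ι) (f : ι → ℂ) :
    (S.card : ℝ) * ‖(∑ j ∈ S, f j) / (S.card : ℂ)‖ ^ 2 ≤ ∑ i ∈ S, ‖f i‖ ^ 2 := by
  rcases S.eq_empty_or_nonempty with h | h
  · simp [h]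
  · rw [pythagoras S h f]
    have : 0 ≤ ∑ i ∈ S, ‖f i - (∑ j ∈ S, f j) / (S.card : ℂ)‖ ^ 2 := by positivity
    linarith

lemma avg_lt {ι : Type*} (S : Finset ι) (f : ι → ℂ) {i j : ι} (hi : i ∈ S) (hj : j ∈ S)
    (hne : f i ≠ f j) :
    (S.card : ℝ) * ‖(∑ j ∈ S, f j) / (S.card : ℂ)‖ ^ 2 < ∑ i ∈ S, ‖f i‖ ^ 2 := by
  have hS : S.Nonempty := ⟨i, hi⟩
  rw [pythagoras S hS f]
  have hex : ∃ k ∈ S, f k ≠ (∑ j ∈ S, f j) / (S.card : ℂ) := by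
    by_contra h
    push_neg at h
    exact hne ((h i hi).trans (h j hj).symm)
  obtain ⟨k, hk, hkne⟩ := hex
  have : 0 < ∑ i ∈ S, ‖f i - (∑ j ∈ S, f j) / (S.card : ℂ)‖ ^ 2 := by
    apply Finset.sum_pos' (fun _ _ => by positivity)
    refine ⟨k, hk, ?_⟩
    have h0 : f k - (∑ j ∈ S, f j) / (S.card : ℂ) ≠ 0 := sub_ne_zero.mpr hkne
    have h1 : 0 < ‖f k - (∑ j ∈ S, f j) / (S.card : ℂ)‖ := norm_pos_iff.mpr h0
    positivity
  linarith

lemma frob_hproj {M N : ℕ} (A : Matrix (Fin M) (Fin N) ℂ) :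
    ∑ k, ∑ l, ‖hproj A k l‖ ^ 2
      = ∑ d ∈ Finset.range (M + N),
          (((univ.filter (fun p : Fin M × Fin N => (p.1 : ℕ) + (p.2 : ℕ) = d)).card : ℝ)
            * ‖(∑ p ∈ univ.filter (fun p : Fin M × Fin N => (p.1 : ℕ) + (p.2 : ℕ) = d),
                  A p.1 p.2)
                / ((univ.filter
                    (fun p : Fin M × Fin N => (p.1 : ℕ) + (p.2 : ℕ) = d)).card : ℂ)‖ ^ 2) := by
  have hmaps : ∀ p : Fin M × Fin N, p ∈ (univ : Finset (Fin M × Fin N)) →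
      (p.1 : ℕ) + (p.2 : ℕ) ∈ Finset.range (M + N) := by
    intro p _
    exact Finset.mem_range.mpr (by have := p.1.isLt; have := p.2.isLt; omega)
  have h := Finset.sum_fiberwise_of_maps_to' hmaps
      (fun d => ‖(∑ p ∈ univ.filter (fun p : Fin M × Fin N => (p.1 : ℕ) + (p.2 : ℕ) = d),
                  A p.1 p.2)
                / ((univ.filter
                    (fun p : Fin M × Fin N => (p.1 : ℕ) + (p.2 : ℕ) = d)).card : ℂ)‖ ^ 2)
  simp only [hproj]
  calc ∑ k : Fin M, ∑ l : Fin N,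
        ‖(∑ p ∈ univ.filter
            (fun p : Fin M × Fin N => (p.1 : ℕ) + (p.2 : ℕ) = (k : ℕ) + (l : ℕ)), A p.1 p.2)
          / ((univ.filter
            (fun p : Fin M × Fin N => (p.1 : ℕ) + (p.2 : ℕ) = (k : ℕ) + (l : ℕ))).card : ℂ)‖ ^ 2
      = ∑ i : Fin M × Fin N,
        ‖(∑ p ∈ univ.filter
            (fun p : Fin M × Fin N => (p.1 : ℕ) + (p.2 : ℕ) = (i.1 : ℕ) + (i.2 : ℕ)), A p.1 p.2)
          / ((univ.filter
            (fun p : Fin M × Fin N => (p.1 : ℕ) + (p.2 : ℕ) = (i.1 : ℕ) + (i.2 : ℕ))).card : ℂ)‖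
          ^ 2 := by
        rw [Fintype.sum_prod_type]
    _ = ∑ d ∈ Finset.range (M + N),
          ∑ _i ∈ univ.filter (fun p : Fin M × Fin N => (p.1 : ℕ) + (p.2 : ℕ) = d),
            ‖(∑ p ∈ univ.filter (fun p : Fin M × Fin N => (p.1 : ℕ) + (p.2 : ℕ) = d),
                  A p.1 p.2)
                / ((univ.filter
                    (fun p : Fin M × Fin N => (p.1 : ℕ) + (p.2 : ℕ) = d)).card : ℂ)‖ ^ 2 :=
        h.symm
    _ = _ := by
        refine Finset.sum_congr rfl fun d _ => ?_
        rw [Finset.sum_const, nsmul_eq_mul]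

lemma frob_orig {M N : ℕ} (A : Matrix (Fin M) (Fin N) ℂ) :
    ∑ k, ∑ l, ‖A k l‖ ^ 2
      = ∑ d ∈ Finset.range (M + N),
          ∑ p ∈ univ.filter (fun p : Fin M × Fin N => (p.1 : ℕ) + (p.2 : ℕ) = d),
            ‖A p.1 p.2‖ ^ 2 := by
  have hmaps : ∀ p : Fin M × Fin N, p ∈ (univ : Finset (Fin M × Fin N)) →
      (p.1 : ℕ) + (p.2 : ℕ) ∈ Finset.range (M + N) := by
    intro p _
    exact Finset.mem_range.mpr (by have := p.1.isLt; have := p.2.isLt; omega)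
  calc ∑ k, ∑ l, ‖A k l‖ ^ 2 = ∑ i : Fin M × Fin N, ‖A i.1 i.2‖ ^ 2 := by
        rw [Fintype.sum_prod_type]
    _ = _ := (Finset.sum_fiberwise_of_maps_to hmaps _).symm

lemma frob_hproj_le {M N : ℕ} (A : Matrix (Fin M) (Fin N) ℂ) :
    ∑ k, ∑ l, ‖hproj A k l‖ ^ 2 ≤ ∑ k, ∑ l, ‖A k l‖ ^ 2 := by
  rw [frob_hproj, frob_orig]
  exact Finset.sum_le_sum fun d _ => avg_le _ _

set_option maxHeartbeats 1000000 in
lemma frob_hproj_lt {M N : ℕ} (A : Matrix (Fin M) (Fin N) ℂ) (h : ¬ IsHankel A) :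
    ∑ k, ∑ l, ‖hproj A k l‖ ^ 2 < ∑ k, ∑ l, ‖A k l‖ ^ 2 := by
  rw [frob_hproj, frob_orig]
  simp only [IsHankel] at h
  push_neg at h
  obtain ⟨k, m, l, n, heq, hne⟩ := h
  refine Finset.sum_lt_sum (fun d _ => avg_le _ _) ?_
  refine ⟨(k : ℕ) + (l : ℕ),
    Finset.mem_range.mpr (by have := k.isLt; have := l.isLt; omega), ?_⟩
  have h1 : ((k, l) : Fin M × Fin N) ∈ univ.filter
      (fun p : Fin M × Fin N => (p.1 : ℕ) + (p.2 : ℕ) = (k : ℕ) + (l : ℕ)) :=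
    Finset.mem_filter.mpr ⟨Finset.mem_univ _, rfl⟩
  have h2 : ((m, n) : Fin M × Fin N) ∈ univ.filter
      (fun p : Fin M × Fin N => (p.1 : ℕ) + (p.2 : ℕ) = (k : ℕ) + (l : ℕ)) :=
    Finset.mem_filter.mpr ⟨Finset.mem_univ _, heq.symm⟩
  have h3 : (fun p : Fin M × Fin N => A p.1 p.2) (k, l)
      ≠ (fun p : Fin M × Fin N => A p.1 p.2) (m, n) := hne
  exact avg_lt (univ.filter
      (fun p : Fin M × Fin N => (p.1 : ℕ) + (p.2 : ℕ) = (k : ℕ) + (l : ℕ)))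
    (fun p : Fin M × Fin N => A p.1 p.2) h1 h2 h3

lemma spec_le {M N : ℕ} (A : Matrix (Fin M) (Fin N) ℂ) (c : ℝ) (hc : 0 ≤ c)
    (h : ∑ k, ∑ l, ‖A k l‖ ^ 2 ≤ c ^ 2) : cspecNorm A ≤ c := by
  refine Real.sSup_le ?_ hc
  rintro r ⟨x, hx, rfl⟩
  have hx2 : ∑ i, ‖x i‖ ^ 2 = 1 := by
    rwa [cvnorm, Real.sqrt_eq_one] at hx
  rw [cvnorm, show c = Real.sqrt (c ^ 2) by rw [Real.sqrt_sq hc]]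
  apply Real.sqrt_le_sqrt
  calc ∑ k, ‖A.mulVec x k‖ ^ 2 ≤ ∑ k, ∑ l, ‖A k l‖ ^ 2 := by
        refine Finset.sum_le_sum fun k _ => ?_
        have h1 : ‖A.mulVec x k‖ ≤ ∑ l, ‖A k l‖ * ‖x l‖ := by
          rw [Matrix.mulVec, dotProduct]
          exact (norm_sum_le _ _).trans (le_of_eq (by simp [norm_mul]))
        calc ‖A.mulVec x k‖ ^ 2 ≤ (∑ l, ‖A k l‖ * ‖x l‖) ^ 2 := by
              apply pow_le_pow_left₀ (norm_nonneg _) h1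
          _ ≤ (∑ l, ‖A k l‖ ^ 2) * (∑ l, ‖x l‖ ^ 2) :=
              Finset.sum_mul_sq_le_sq_mul_sq _ _ _
          _ = ∑ l, ‖A k l‖ ^ 2 := by rw [hx2, mul_one]
    _ ≤ c ^ 2 := h

lemma frob_rank1 {M N : ℕ} (u : Fin M → ℂ) (v : Fin N → ℂ)
    (hu : cvnorm u = 1) (hv : cvnorm v = 1) (σ : ℝ) :
    ∑ k, ∑ l, ‖((σ : ℂ) • vecMulVec u (star v)) k l‖ ^ 2 = σ ^ 2 := by
  have hu2 : ∑ i, ‖u i‖ ^ 2 = 1 := by rwa [cvnorm, Real.sqrt_eq_one] at hu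
  have hv2 : ∑ i, ‖v i‖ ^ 2 = 1 := by rwa [cvnorm, Real.sqrt_eq_one] at hv
  have hterm : ∀ (k : Fin M) (l : Fin N),
      ‖((σ : ℂ) • vecMulVec u (star v)) k l‖ ^ 2 = σ ^ 2 * (‖u k‖ ^ 2 * ‖v l‖ ^ 2) := by
    intro k l
    simp only [Matrix.smul_apply, vecMulVec_apply, Pi.star_apply, smul_eq_mul,
      norm_mul, Complex.norm_real, norm_star, Real.norm_eq_abs]
    rw [mul_pow, mul_pow, sq_abs]
  calc ∑ k, ∑ l, ‖((σ : ℂ) • vecMulVec u (star v)) k l‖ ^ 2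
      = ∑ k, ∑ l, σ ^ 2 * (‖u k‖ ^ 2 * ‖v l‖ ^ 2) :=
        Finset.sum_congr rfl fun k _ => Finset.sum_congr rfl fun l _ => hterm k l
    _ = σ ^ 2 * ((∑ k, ‖u k‖ ^ 2) * (∑ l, ‖v l‖ ^ 2)) := by
        simp_rw [Finset.sum_mul_sum, Finset.mul_sum]
    _ = σ ^ 2 := by rw [hu2, hv2, one_mul, mul_one]

set_option maxHeartbeats 1600000 in
/-- One Cadzow step does not increase the largest singular value:
`σ_{j+1} = ‖P(σ_j u_j v_j^*)‖₂ ≤ σ_j`, strictly unless `u_j v_j^*` is Hankel. -/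
theorem stmt18 (M N : ℕ) (hM : 2 ≤ M) (hMN : M ≤ N)
    (u : Fin M → ℂ) (v : Fin N → ℂ) (hu : cvnorm u = 1) (hv : cvnorm v = 1)
    (σ : ℝ) (hσ : 0 < σ) :
    cspecNorm (hproj ((σ : ℂ) • vecMulVec u (star v))) ≤ σ ∧
    (¬ IsHankel (vecMulVec u (star v)) →
      cspecNorm (hproj ((σ : ℂ) • vecMulVec u (star v))) < σ) := by
  set A := (σ : ℂ) • vecMulVec u (star v) with hAdef
  have hA : ∑ k, ∑ l, ‖A k l‖ ^ 2 = σ ^ 2 := frob_rank1 u v hu hv σ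
  constructor
  · exact spec_le _ σ hσ.le ((frob_hproj_le A).trans hA.le)
  · intro hnh
    have hσc : (σ : ℂ) ≠ 0 := by exact_mod_cast hσ.ne'
    have hAn : ¬ IsHankel A := by
      intro hH
      apply hnh
      intro k m l n he
      have h := hH k m l n he
      rw [hAdef] at h
      simp only [Matrix.smul_apply, smul_eq_mul] at h
      exact mul_left_cancel₀ hσc h
    have hlt : ∑ k, ∑ l, ‖hproj A k l‖ ^ 2 < σ ^ 2 := (frob_hproj_lt A hAn).trans_le hA.le
    have hF0 : (0:ℝ) ≤ ∑ k, ∑ l, ‖hproj A k l‖ ^ 2 :=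
      Finset.sum_nonneg fun k _ => Finset.sum_nonneg fun l _ => sq_nonneg _
    have h1 : cspecNorm (hproj A) ≤ Real.sqrt (∑ k, ∑ l, ‖hproj A k l‖ ^ 2) :=
      spec_le _ _ (Real.sqrt_nonneg _) (by rw [Real.sq_sqrt hF0])
    have h2 : Real.sqrt (∑ k, ∑ l, ‖hproj A k l‖ ^ 2) < σ := by
      rw [show σ = Real.sqrt (σ ^ 2) by rw [Real.sqrt_sq hσ.le]]
      exact Real.sqrt_lt_sqrt hF0 hlt
    linarith
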